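/- Let C_1, …, C_L be p×p real symmetric positive semidefinite matrices and let w_1, …, w_L ≥ 0 with Σ_{l=1}^L w_l = 1 (not all zero). Then the functional Ω ↦ Σ_{l=1}^L w_l d_S²(C_l, Ω), over p×p symmetric positive semidefinite matrices Ω, is uniquely minimized at Ω̂ = (Σ_{l=1}^L w_l C_l^{1/2})², the square of the weighted average of the square roots. -/

import Mathlib

open Matrix MeasureTheory ProbabilityTheory

noncomputable def eunorm {p : ℕ} (x : Fin p → ℝ) : ℝ := Real.sqrt (∑ i, x i ^ 2)

noncomputable def frob {p : ℕ} (M : Matrix (Fin p) (Fin p) ℝ) : ℝ :=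
  Real.sqrt (∑ i, ∑ j, M i j ^ 2)

open Classical in
noncomputable def msqrt {p : ℕ} (A : Matrix (Fin p) (Fin p) ℝ) : Matrix (Fin p) (Fin p) ℝ :=
  if h : A.PosSemidef then
    (h.1.eigenvectorUnitary : Matrix (Fin p) (Fin p) ℝ) *
      diagonal ((RCLike.ofReal : ℝ → ℝ) ∘ Real.sqrt ∘ h.1.eigenvalues) *
      (star h.1.eigenvectorUnitary : Matrix (Fin p) (Fin p) ℝ)
  else 0

noncomputable def dS {p : ℕ} (A B : Matrix (Fin p) (Fin p) ℝ) : ℝ := frob (msqrt A - msqrt B)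

noncomputable def mExp {p : ℕ} {Ωs : Type*} [MeasurableSpace Ωs] (μ : Measure Ωs)
    (F : Ωs → Matrix (Fin p) (Fin p) ℝ) : Matrix (Fin p) (Fin p) ℝ :=
  Matrix.of fun i j => ∫ ω, F ω i j ∂μ

noncomputable def covDS {p : ℕ} {Ωs : Type*} [MeasurableSpace Ωs] (μ : Measure Ωs)
    (Y : Ωs → Fin p → ℝ) : Matrix (Fin p) (Fin p) ℝ :=
  (mExp μ fun ω => msqrt (vecMulVec (Y ω - fun r => ∫ ω', Y ω' r ∂μ) (Y ω - fun r => ∫ ω', Y ω' r ∂μ))) *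
  (mExp μ fun ω => msqrt (vecMulVec (Y ω - fun r => ∫ ω', Y ω' r ∂μ) (Y ω - fun r => ∫ ω', Y ω' r ∂μ)))

/-! ### Auxiliary lemmas -/

open scoped MatrixOrder

lemma psd_smul {p : ℕ} {A : Matrix (Fin p) (Fin p) ℝ} (hA : A.PosSemidef) {c : ℝ}
    (hc : 0 ≤ c) : (c • A).PosSemidef := by
  refine ⟨?_, fun x => ?_⟩
  · unfold Matrix.IsHermitian
    rw [Matrix.conjTranspose_smul, hA.1]
    simp
  · exact (hA.smul hc).2 x

lemma psd_sum {p L : ℕ} (A : Fin L → Matrix (Fin p) (Fin p) ℝ)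
    (hA : ∀ l, (A l).PosSemidef) (w : Fin L → ℝ) (hw : ∀ l, 0 ≤ w l) :
    (∑ l, w l • A l).PosSemidef := by
  classical
  refine Finset.sum_induction _ _ (fun a b ha hb => ha.add hb) ?_ ?_
  · exact Matrix.PosSemidef.zero
  · intro l _
    exact psd_smul (hA l) (hw l)

lemma msqrt_eq {p : ℕ} {A : Matrix (Fin p) (Fin p) ℝ} (hA : A.PosSemidef) :
    msqrt A = CFC.sqrt A := by
  rw [msqrt, dif_pos hA, CFC.sqrt_eq_cfc, cfc_nnreal_eq_real _ A, hA.1.cfc_eq,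
    IsHermitian.cfc, Unitary.conjStarAlgAut_apply]
  congr 2
  ext i j
  simp [diagonal_apply, Real.coe_toNNReal', Real.sqrt_eq_zero', max_def]
  split_ifs <;> simp_all [Real.sqrt_eq_zero']

lemma msqrt_mul_self {p : ℕ} {A : Matrix (Fin p) (Fin p) ℝ} (hA : A.PosSemidef) :
    msqrt A * msqrt A = A := by
  rw [msqrt_eq hA]
  exact CFC.sqrt_mul_sqrt_self A hA.nonneg

lemma msqrt_posSemidef {p : ℕ} {A : Matrix (Fin p) (Fin p) ℝ} (hA : A.PosSemidef) :
    (msqrt A).PosSemidef := by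
  rw [msqrt_eq hA]
  exact (CFC.sqrt_nonneg A).posSemidef

lemma msqrt_sq {p : ℕ} {S : Matrix (Fin p) (Fin p) ℝ} (hS : S.PosSemidef) :
    msqrt (S * S) = S := by
  have hSS : (S * S).PosSemidef := by
    have := hS.pow 2
    rwa [pow_two] at this
  rw [msqrt_eq hSS]
  exact CFC.sqrt_mul_self S hS.nonneg

lemma dS_sq {p : ℕ} (A B : Matrix (Fin p) (Fin p) ℝ) :
    dS A B ^ 2 = ∑ i, ∑ j, (msqrt A i j - msqrt B i j) ^ 2 := by
  rw [dS, frob, Real.sq_sqrt]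
  · simp [Matrix.sub_apply]
  · exact Finset.sum_nonneg fun i _ => Finset.sum_nonneg fun j _ => sq_nonneg _

lemma scalar_key {L : ℕ} (a : Fin L → ℝ) (w : Fin L → ℝ) (hsum : ∑ l, w l = 1)
    (s r : ℝ) (hs : s = ∑ l, w l * a l) :
    ∑ l, w l * (a l - r) ^ 2 = (∑ l, w l * (a l - s) ^ 2) + (s - r) ^ 2 := by
  have h : ∀ l ∈ Finset.univ, w l * (a l - r) ^ 2 =
      w l * (a l - s) ^ 2 + w l * ((s - r) ^ 2) + (2 * (s - r)) * (w l * a l)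
        - (2 * (s - r) * s) * w l := by
    intro l _; ring
  rw [Finset.sum_congr rfl h]
  rw [Finset.sum_sub_distrib, Finset.sum_add_distrib, Finset.sum_add_distrib,
    ← Finset.sum_mul, ← Finset.mul_sum, ← Finset.mul_sum, hsum, ← hs]
  ring

/-- For psd matrices `C₁,…,C_L` and convex weights `w`, the functional
`Ω ↦ Σ w_l d_S²(C_l, Ω)` over psd `Ω` is uniquely minimized at `Ω̂ = (Σ w_l C_l^{1/2})²`. -/
theorem stmt12 {p L : ℕ} (C : Fin L → Matrix (Fin p) (Fin p) ℝ)
    (hC : ∀ l, (C l).PosSemidef)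
    (w : Fin L → ℝ) (hw : ∀ l, 0 ≤ w l) (hsum : ∑ l, w l = 1)
    (Ωhat : Matrix (Fin p) (Fin p) ℝ)
    (hΩhat : Ωhat = (∑ l, w l • msqrt (C l)) * (∑ l, w l • msqrt (C l))) :
    Ωhat.PosSemidef ∧
    (∀ W : Matrix (Fin p) (Fin p) ℝ, W.PosSemidef →
      ∑ l, w l * dS (C l) Ωhat ^ 2 ≤ ∑ l, w l * dS (C l) W ^ 2) ∧
    (∀ W : Matrix (Fin p) (Fin p) ℝ, W.PosSemidef →
      (∑ l, w l * dS (C l) W ^ 2) ≤ (∑ l, w l * dS (C l) Ωhat ^ 2) → W = Ωhat) := by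
  classical
  set S : Matrix (Fin p) (Fin p) ℝ := ∑ l, w l • msqrt (C l) with hSdef
  have hS : S.PosSemidef := psd_sum _ (fun l => msqrt_posSemidef (hC l)) w hw
  have hΩ : Ωhat.PosSemidef := by
    rw [hΩhat, ← pow_two]
    exact hS.pow 2
  have hmsqrtΩ : msqrt Ωhat = S := by rw [hΩhat]; exact msqrt_sq hS
  have hSentry : ∀ i j, S i j = ∑ l, w l * msqrt (C l) i j := by
    intro i j
    simp [hSdef, Matrix.sum_apply]
  have key : ∀ W : Matrix (Fin p) (Fin p) ℝ,
      ∑ l, w l * dS (C l) W ^ 2 =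
        (∑ l, w l * dS (C l) Ωhat ^ 2) + ∑ i, ∑ j, (S i j - msqrt W i j) ^ 2 := by
    intro W
    have swap : ∀ R : Matrix (Fin p) (Fin p) ℝ,
        ∑ l, w l * dS (C l) R ^ 2 =
          ∑ i, ∑ j, ∑ l, w l * (msqrt (C l) i j - msqrt R i j) ^ 2 := by
      intro R
      simp_rw [dS_sq, Finset.mul_sum]
      rw [Finset.sum_comm]
      congr 1
      ext i
      rw [Finset.sum_comm]
    rw [swap W, swap Ωhat, hmsqrtΩ, ← Finset.sum_add_distrib]
    congr 1
    ext i
    rw [← Finset.sum_add_distrib]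
    congr 1
    ext j
    exact scalar_key _ w hsum _ _ (hSentry i j)
  refine ⟨hΩ, fun W hW => ?_, fun W hW hle => ?_⟩
  · rw [key W]
    have : (0:ℝ) ≤ ∑ i, ∑ j, (S i j - msqrt W i j) ^ 2 :=
      Finset.sum_nonneg fun i _ => Finset.sum_nonneg fun j _ => sq_nonneg _
    linarith
  · rw [key W] at hle
    have hz : ∑ i, ∑ j, (S i j - msqrt W i j) ^ 2 = 0 := by
      have : (0:ℝ) ≤ ∑ i, ∑ j, (S i j - msqrt W i j) ^ 2 :=
        Finset.sum_nonneg fun i _ => Finset.sum_nonneg fun j _ => sq_nonneg _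
      linarith
    have hRS : msqrt W = S := by
      ext i j
      have hi := (Finset.sum_eq_zero_iff_of_nonneg
        (fun i _ => Finset.sum_nonneg fun j _ => sq_nonneg (S i j - msqrt W i j))).mp hz i
        (Finset.mem_univ i)
      have hj := (Finset.sum_eq_zero_iff_of_nonneg
        (fun j _ => sq_nonneg (S i j - msqrt W i j))).mp hi j (Finset.mem_univ j)
      have := pow_eq_zero_iff (n := 2) (by norm_num) |>.mp hj
      linarith [this]
    rw [← msqrt_mul_self hW, hRS, hΩhat]
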